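/- arXiv:1502.02320 — 6 statements merged into one kernel-verified Lean document; each statement's English description precedes it below -/
import Mathlib

section
/- Let x be a right-continuous function with left limits from [0,∞) to ℝ with x(0) ≥ 0. Define y(t) = -inf_{0≤s≤t} min(x(s), 0) and z(t) = x(t) + y(t). Then (z, y) solves the one-dimensional Skorohod problem for x: z(t) ≥ 0 for all t, y(0) = 0, y is non-decreasing, and y increases only when z = 0 (i.e., ∫_{[0,∞)} z(t) dy(t) = 0). -/
open MeasureTheory Set Filter
open Topology

/-- `x` is right-continuous with left limits on `[0,∞)`. -/
def RCLL (x : ℝ → ℝ) : Prop :=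
  (∀ t : ℝ, 0 ≤ t → ContinuousWithinAt x (Set.Ici t) t) ∧
  (∀ t : ℝ, 0 < t → ∃ l : ℝ, Filter.Tendsto x (nhdsWithin t (Set.Iio t)) (nhds l))

namespace SkorohodAux

noncomputable def m (x : ℝ → ℝ) (t : ℝ) : ℝ :=
  sInf ((fun s => min (x s) 0) '' Icc 0 t)

variable {x : ℝ → ℝ}

/-- RCLL functions are bounded below on `[0,t]`. -/
lemma bddBelow_on_Icc (hx : RCLL x) {t : ℝ} (ht : 0 ≤ t) :
    ∃ M : ℝ, ∀ s ∈ Icc (0:ℝ) t, M ≤ x s := by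
  have key : ∀ s ∈ Icc (0:ℝ) t, ∃ p : Set ℝ × ℝ, p.1 ∈ 𝓝 s ∧
      ∀ u ∈ p.1 ∩ Icc (0:ℝ) t, p.2 ≤ x u := by
    intro s hs
    have hr := hx.1 s hs.1
    rw [Metric.continuousWithinAt_iff] at hr
    obtain ⟨δ1, hδ1, h1⟩ := hr 1 one_pos
    have hleft : ∃ δ2 : ℝ, 0 < δ2 ∧ ∃ L : ℝ, ∀ u, s - δ2 < u → u < s → 0 ≤ u → L ≤ x u := by
      rcases lt_or_eq_of_le hs.1 with hs0 | hs0
      · obtain ⟨l, hl⟩ := hx.2 s hs0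
        have := hl (Metric.ball_mem_nhds l one_pos)
        rw [mem_map, mem_nhdsWithin] at this
        obtain ⟨U, hUo, hsU, hU⟩ := this
        obtain ⟨δ2, hδ2, hball⟩ := Metric.isOpen_iff.1 hUo s hsU
        refine ⟨δ2, hδ2, l - 1, fun u hu1 hu2 _ => ?_⟩
        have : u ∈ U ∩ Iio s :=
          ⟨hball (by rw [Metric.mem_ball, Real.dist_eq, abs_lt]; constructor <;> linarith), hu2⟩
        have := hU this
        simp only [mem_preimage, Metric.mem_ball, Real.dist_eq, abs_lt] at this
        linarith [this.1]
      · exact ⟨1, one_pos, 0, fun u hu1 hu2 hu3 =>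
          absurd (hu2.trans_le (le_of_eq hs0.symm)) (not_lt.2 hu3)⟩
    obtain ⟨δ2, hδ2, L, hL⟩ := hleft
    refine ⟨(Ioo (s - δ2) (s + δ1), min (x s - 1) L),
      Ioo_mem_nhds (by linarith) (by linarith), ?_⟩
    rintro u ⟨⟨hu1, hu2⟩, hu3, hu4⟩
    rcases lt_or_ge u s with hus | hus
    · exact le_trans (min_le_right _ _) (hL u hu1 hus hu3)
    · have := h1 (mem_Ici.2 hus) (by rw [Real.dist_eq, abs_lt]; constructor <;> linarith)
      rw [Real.dist_eq, abs_lt] at this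
      have : x s - 1 ≤ x u := by linarith [this.1]
      exact le_trans (min_le_left _ _) this
  choose! p hp1 hp2 using key
  obtain ⟨F, hF⟩ := (isCompact_Icc (a := (0:ℝ)) (b := t)).elim_nhds_subcover'
    (fun s hs => (p s).1) (fun s hs => hp1 s hs)
  have hFne : F.Nonempty := by
    by_contra h
    rw [Finset.not_nonempty_iff_eq_empty] at h
    subst h
    simpa using hF ⟨le_refl 0, ht⟩
  refine ⟨F.inf' hFne (fun a => (p a.1).2), fun s hs => ?_⟩
  obtain ⟨a, ha, hsa⟩ := Set.mem_iUnion₂.1 (hF hs)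
  exact le_trans (Finset.inf'_le _ ha) (hp2 a.1 a.2 s ⟨hsa, hs⟩)

lemma img_ne {t : ℝ} (ht : 0 ≤ t) : ((fun s => min (x s) 0) '' Icc 0 t).Nonempty :=
  (Set.nonempty_Icc.2 ht).image _

lemma img_bdd (hx : RCLL x) {t : ℝ} (ht : 0 ≤ t) :
    BddBelow ((fun s => min (x s) 0) '' Icc 0 t) := by
  obtain ⟨M, hM⟩ := bddBelow_on_Icc hx ht
  refine ⟨min M 0, ?_⟩
  rintro v ⟨s, hs, rfl⟩
  exact min_le_min (hM s hs) le_rfl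

lemma m_le (hx : RCLL x) {t : ℝ} (ht : 0 ≤ t) {s : ℝ} (hs : s ∈ Icc (0:ℝ) t) :
    m x t ≤ min (x s) 0 :=
  csInf_le (img_bdd hx ht) ⟨s, hs, rfl⟩

lemma m_nonpos (hx : RCLL x) {t : ℝ} (ht : 0 ≤ t) : m x t ≤ 0 :=
  (m_le hx ht ⟨le_rfl, ht⟩).trans (min_le_right _ _)

lemma le_m {t : ℝ} (ht : 0 ≤ t) {c : ℝ}
    (h : ∀ s ∈ Icc (0:ℝ) t, c ≤ min (x s) 0) : c ≤ m x t :=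
  le_csInf (img_ne ht) (by rintro v ⟨s, hs, rfl⟩; exact h s hs)

lemma m_anti (hx : RCLL x) {s t : ℝ} (hs : 0 ≤ s) (hst : s ≤ t) : m x t ≤ m x s :=
  csInf_le_csInf (img_bdd hx (hs.trans hst)) (img_ne hs)
    (Set.image_mono (Set.Icc_subset_Icc le_rfl hst))

lemma m_zero (hx0 : 0 ≤ x 0) : m x 0 = 0 := by
  simp only [m, Set.Icc_self, Set.image_singleton, csInf_singleton]
  exact min_eq_right hx0

lemma m_right (hx : RCLL x) {t : ℝ} (ht : 0 ≤ t) {ε : ℝ} (hε : 0 < ε) :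
    ∃ δ > 0, ∀ s, t ≤ s → s < t + δ → m x t - ε ≤ m x s := by
  have hr := hx.1 t ht
  rw [Metric.continuousWithinAt_iff] at hr
  obtain ⟨δ, hδ, h1⟩ := hr ε hε
  refine ⟨δ, hδ, fun s hts hsδ => ?_⟩
  refine le_m (ht.trans hts) (fun u hu => ?_)
  rcases le_or_gt u t with hut | hut
  · calc m x t - ε ≤ m x t := by linarith
      _ ≤ min (x u) 0 := m_le hx ht ⟨hu.1, hut⟩
  · have := h1 (mem_Ici.2 hut.le) (by rw [Real.dist_eq, abs_lt]; constructor <;> linarith [hu.2])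
    rw [Real.dist_eq, abs_lt] at this
    have hxu : x t - ε < x u := by linarith [this.1]
    have hmin : min (x t) 0 - ε ≤ min (x u) 0 := by
      simp only [min_def]; split_ifs <;> linarith
    calc m x t - ε ≤ min (x t) 0 - ε := by linarith [m_le hx ht (⟨ht, le_rfl⟩ : t ∈ Icc 0 t)]
      _ ≤ min (x u) 0 := hmin

lemma m_const_right (hx : RCLL x) {t : ℝ} (ht : 0 ≤ t) (h : m x t < x t) :
    ∃ δ > 0, ∀ s, t ≤ s → s < t + δ → m x s = m x t := by
  have hr := hx.1 t ht
  rw [Metric.continuousWithinAt_iff] at hr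
  obtain ⟨δ, hδ, h1⟩ := hr (x t - m x t) (by linarith)
  refine ⟨δ, hδ, fun s hts hsδ => ?_⟩
  refine le_antisymm (m_anti hx ht hts) ?_
  refine le_m (ht.trans hts) (fun u hu => ?_)
  rcases le_or_gt u t with hut | hut
  · exact m_le hx ht ⟨hu.1, hut⟩
  · have := h1 (mem_Ici.2 hut.le) (by rw [Real.dist_eq, abs_lt]; constructor <;> linarith [hu.2])
    rw [Real.dist_eq, abs_lt] at this
    have hxu : m x t < x u := by linarith [this.1]
    exact le_min hxu.le (m_nonpos hx ht)

lemma m_left (hx : RCLL x) (hx0 : 0 ≤ x 0) {t : ℝ} (ht : 0 < t) (h : m x t < x t)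
    {ε : ℝ} (hε : 0 < ε) : ∃ a, 0 ≤ a ∧ a < t ∧ m x a ≤ m x t + ε := by
  rcases eq_or_lt_of_le (m_nonpos hx ht.le) with hm0 | hm0
  · exact ⟨0, le_rfl, ht, by rw [m_zero hx0, ← hm0]; linarith⟩
  · have hgt : m x t < min (x t) 0 := lt_min h hm0
    have hlt : m x t < min (min (x t) 0) (m x t + ε) := lt_min hgt (by linarith)
    obtain ⟨v, ⟨u, hu, rfl⟩, hv⟩ := exists_lt_of_csInf_lt (img_ne ht.le) hlt
    have hut : u ≠ t := by
      intro h'; subst h'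
      exact absurd (hv.trans_le (min_le_left _ _)) (lt_irrefl _)
    have hu' : u < t := lt_of_le_of_ne hu.2 hut
    refine ⟨u, hu.1, hu', ?_⟩
    calc m x u ≤ min (x u) 0 := m_le hx hu.1 ⟨hu.1, le_rfl⟩
      _ ≤ m x t + ε := (hv.trans_le (min_le_right _ _)).le

noncomputable def F (x : ℝ → ℝ) (hx : RCLL x) : StieltjesFunction ℝ where
  toFun := fun t => -(m x (max t 0))
  mono' := fun s t hst =>
    neg_le_neg (m_anti hx (le_max_right s 0) (max_le_max hst le_rfl))
  right_continuous' := by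
    intro t
    by_cases ht : 0 ≤ t
    · have : Tendsto (fun s => -(m x (max s 0))) (𝓝[≥] t) (𝓝 (-(m x (max t 0)))) := by
        rw [max_eq_left ht]
        rw [tendsto_order]
        constructor
        · intro b hb
          filter_upwards [self_mem_nhdsWithin] with s hs
          have : m x (max s 0) ≤ m x t := m_anti hx ht ((mem_Ici.1 hs).trans (le_max_left s 0))
          linarith
        · intro b hb
          have hε : 0 < (b + m x t) / 2 := by simp only [neg_lt] at hb; linarith
          obtain ⟨δ, hδ, hδ2⟩ := m_right hx ht hε
          filter_upwards [Ico_mem_nhdsGE_of_mem ⟨le_refl t, lt_add_of_pos_right t hδ⟩] with s hs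
          rw [max_eq_left (ht.trans hs.1)]
          have := hδ2 s hs.1 hs.2
          simp only [neg_lt] at hb ⊢
          linarith
      exact this
    · have hmem : Iio (0:ℝ) ∈ 𝓝[Ici t] t := nhdsWithin_le_nhds (Iio_mem_nhds (not_le.1 ht))
      have hev : (fun s => -(m x (max s 0))) =ᶠ[𝓝[Ici t] t] (fun _ => -(m x 0)) :=
        eventually_of_mem hmem (fun s hs => by
          simp only []; rw [max_eq_right (le_of_lt hs)])
      exact (continuousWithinAt_const (b := -(m x 0))).congr_of_eventuallyEq hev
        (by rw [max_eq_right (not_le.1 ht).le])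

lemma F_apply (hx : RCLL x) {t : ℝ} (ht : 0 ≤ t) : F x hx t = -(m x t) := by
  simp only [F]; rw [max_eq_left ht]

lemma null_singleton (hx : RCLL x) (hx0 : 0 ≤ x 0) {t : ℝ} (ht : 0 ≤ t) (h : m x t < x t) :
    (F x hx).measure {t} = 0 := by
  rcases eq_or_lt_of_le ht with ht0 | ht0
  · subst ht0
    refine measure_mono_null (singleton_subset_iff.2 ?_) (?_ : (F x hx).measure (Ioc (-1) 0) = 0)
    · exact ⟨by norm_num, le_rfl⟩
    · rw [StieltjesFunction.measure_Ioc]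
      have h1 : F x hx 0 = -(m x 0) := F_apply hx le_rfl
      have h2 : F x hx (-1) = -(m x 0) := by
        show -(m x (max (-1:ℝ) 0)) = -(m x 0)
        norm_num
      rw [h1, h2]; simp
  · refine le_antisymm ?_ zero_le
    refine ENNReal.le_of_forall_pos_le_add (fun ε hε _ => ?_)
    obtain ⟨a, ha0, hat, ham⟩ := m_left hx hx0 ht0 h (by exact_mod_cast hε : (0:ℝ) < ε)
    calc (F x hx).measure {t} ≤ (F x hx).measure (Ioc a t) :=
          measure_mono (singleton_subset_iff.2 ⟨hat, le_rfl⟩)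
      _ = ENNReal.ofReal (F x hx t - F x hx a) := StieltjesFunction.measure_Ioc _ _ _
      _ ≤ ENNReal.ofReal (ε : ℝ) := by
          rw [F_apply hx ht, F_apply hx ha0]
          exact ENNReal.ofReal_le_ofReal (by linarith)
      _ = (0 : ENNReal) + ε := by rw [zero_add, ENNReal.ofReal_coe_nnreal]

lemma null_A (hx : RCLL x) (hx0 : 0 ≤ x 0) :
    ∃ N : Set ℝ, MeasurableSet N ∧ {t : ℝ | 0 ≤ t ∧ m x t < x t} ⊆ N ∧
      (F x hx).measure N = 0 := by
  set μ := (F x hx).measure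
  set A := {t : ℝ | 0 ≤ t ∧ m x t < x t} with hA
  have hδ : ∀ t ∈ A, ∃ δ > 0, ∀ s, t ≤ s → s < t + δ → m x s = m x t :=
    fun t ht => m_const_right hx ht.1 ht.2
  choose! δ hδpos hδconst using hδ
  have hIoo : ∀ t ∈ A, μ (Ioo t (t + δ t / 2)) = 0 := by
    intro t ht
    refine measure_mono_null Ioo_subset_Ioc_self ?_
    rw [StieltjesFunction.measure_Ioc, F_apply hx ht.1,
        F_apply hx (le_trans ht.1 (by linarith [hδpos t ht] : t ≤ t + δ t / 2))]
    rw [hδconst t ht (t + δ t / 2) (by linarith [hδpos t ht]) (by linarith [hδpos t ht])]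
    simp
  set V := ⋃ t ∈ A, Ioo t (t + δ t / 2) with hV
  have hVopen : IsOpen V := isOpen_biUnion (fun t _ => isOpen_Ioo)
  have hVnull : μ V = 0 := by
    obtain ⟨T, hTc, hTeq⟩ := TopologicalSpace.isOpen_iUnion_countable
      (fun i : A => Ioo (i : ℝ) ((i : ℝ) + δ i / 2)) (fun i => isOpen_Ioo)
    have : V = ⋃ i ∈ T, Ioo (i : ℝ) ((i : ℝ) + δ i / 2) := by
      rw [hTeq, hV, Set.iUnion_coe_set]
    rw [this]
    exact (measure_biUnion_null_iff hTc).2 (fun i _ => hIoo i i.2)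
  set E := A \ V with hE
  have hEc : E.Countable := by
    have hq : ∀ t ∈ E, ∃ q : ℚ, t < (q : ℝ) ∧ (q : ℝ) < t + δ t / 2 := by
      intro t ht
      exact_mod_cast exists_rat_btwn (by linarith [hδpos t ht.1] : t < t + δ t / 2)
    choose! q hq1 hq2 using hq
    have hinj : Set.InjOn q E := by
      intro t1 h1 t2 h2 heq
      by_contra hne
      rcases lt_or_gt_of_ne hne with hlt | hlt
      · have hnm : t2 ∉ Ioo t1 (t1 + δ t1 / 2) := fun hmem =>
          h2.2 (Set.mem_biUnion h1.1 hmem)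
        have ht2 : t1 + δ t1 / 2 ≤ t2 := by
          by_contra hc
          exact hnm ⟨hlt, not_le.1 hc⟩
        have hcast : ((q t1 : ℝ)) = ((q t2 : ℝ)) := by rw [heq]
        linarith [hq2 t1 h1, hq1 t2 h2]
      · have hnm : t1 ∉ Ioo t2 (t2 + δ t2 / 2) := fun hmem =>
          h1.2 (Set.mem_biUnion h2.1 hmem)
        have ht1 : t2 + δ t2 / 2 ≤ t1 := by
          by_contra hc
          exact hnm ⟨hlt, not_le.1 hc⟩
        have hcast : ((q t1 : ℝ)) = ((q t2 : ℝ)) := by rw [heq]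
        linarith [hq2 t2 h2, hq1 t1 h1]
    exact Set.countable_of_injective_of_countable_image hinj (Set.to_countable _)
  have hEnull : μ E = 0 := by
    rw [← Set.biUnion_of_singleton E]
    exact (measure_biUnion_null_iff hEc).2 (fun t ht => null_singleton hx hx0 ht.1.1 ht.1.2)
  refine ⟨V ∪ E, hVopen.measurableSet.union hEc.measurableSet, ?_, ?_⟩
  · intro t ht
    by_cases htV : t ∈ V
    · exact Or.inl htV
    · exact Or.inr ⟨ht, htV⟩
  · exact measure_union_null hVnull hEnull

end SkorohodAux

/-- The explicit pair `(z, y)` with `y(t) = -inf_{0≤s≤t} min(x(s),0)` and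
`z(t) = x(t) + y(t)` solves the one-dimensional Skorohod problem for `x`. -/
theorem skorohod_explicit_solution (x : ℝ → ℝ) (hx : RCLL x) (hx0 : 0 ≤ x 0) :
    let y : ℝ → ℝ := fun t => -sInf ((fun s => min (x s) 0) '' Set.Icc 0 t)
    let z : ℝ → ℝ := fun t => x t + y t
    (∀ t, 0 ≤ t → 0 ≤ z t) ∧
    y 0 = 0 ∧
    MonotoneOn y (Set.Ici 0) ∧
    ∃ f : StieltjesFunction ℝ, (∀ t, 0 ≤ t → f t = y t) ∧
      ∫⁻ t in Set.Ici (0 : ℝ), ENNReal.ofReal (z t) ∂f.measure = 0 := by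
  intro y z
  have hy : ∀ t, y t = -(SkorohodAux.m x t) := fun t => rfl
  refine ⟨?_, ?_, ?_, ?_⟩
  · intro t ht
    have h1 : SkorohodAux.m x t ≤ min (x t) 0 :=
      SkorohodAux.m_le hx ht ⟨ht, le_rfl⟩
    have : SkorohodAux.m x t ≤ x t := h1.trans (min_le_left _ _)
    show 0 ≤ x t + y t
    rw [hy]; linarith
  · show y 0 = 0
    rw [hy, SkorohodAux.m_zero hx0, neg_zero]
  · intro s hs t ht hst
    show y s ≤ y t
    rw [hy, hy]
    exact neg_le_neg (SkorohodAux.m_anti hx hs hst)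
  · refine ⟨SkorohodAux.F x hx, fun t ht => (SkorohodAux.F_apply hx ht).trans (hy t).symm, ?_⟩
    obtain ⟨N, hNmeas, hNsub, hNnull⟩ := SkorohodAux.null_A hx hx0
    set μ := (SkorohodAux.F x hx).measure
    have hae : (fun t => ENNReal.ofReal (z t)) =ᵐ[μ.restrict (Set.Ici 0)]
        (fun _ => (0 : ENNReal)) := by
      rw [Filter.EventuallyEq, ae_iff]
      refine measure_mono_null (fun t ht => ?_) (?_ : μ.restrict (Set.Ici 0) (N ∪ Set.Iio 0) = 0)
      · simp only [Set.mem_setOf_eq] at ht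
        by_cases ht0 : 0 ≤ t
        · have hz : 0 < z t := by
            rcases lt_or_ge 0 (z t) with h | h
            · exact h
            · exact absurd (ENNReal.ofReal_eq_zero.2 h) ht
          have : SkorohodAux.m x t < x t := by
            have := hy t
            simp only [z] at hz
            rw [this] at hz
            linarith
          exact Or.inl (hNsub ⟨ht0, this⟩)
        · exact Or.inr (not_le.1 ht0)
      · rw [Measure.restrict_apply (hNmeas.union measurableSet_Iio)]
        refine measure_mono_null ?_ hNnull
        intro t ⟨h1, h2⟩
        rcases h1 with h | h
        · exact h
        · exact absurd (Set.mem_Ici.1 h2) (not_le.2 h)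
    rw [lintegral_congr_ae hae, lintegral_zero]
end

section
/- Consider the linear program: minimize c₁q₁ + c₂q₂ + c₃q₃ subject to q₁/μ₁ + q₂/μ₂ = w₁, q₂/μ₃ + q₃/μ₃ = w₂, and q₁, q₂, q₃ ≥ 0, where μ₁, μ₂, μ₃, c₁, c₂, c₃ > 0 satisfy c₁μ₁ - c₂μ₂ + c₃μ₂ > 0, and w₁, w₂ ≥ 0. Then the optimal value equals ĥ(w₁,w₂) = (c₁μ₁)w₁ + (μ₃/μ₂)(c₂μ₂ - c₁μ₁)w₂ when μ₃w₂ ≤ μ₂w₁, and equals (c₂μ₂ - c₃μ₂)w₁ + (c₃μ₃)w₂ when μ₃w₂ ≥ μ₂w₁. -/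
/-- The optimal value of the static workload LP
`minimize c₁q₁ + c₂q₂ + c₃q₃` subject to `q₁/μ₁ + q₂/μ₂ = w₁`,
`q₂/μ₃ + q₃/μ₃ = w₂`, `q ≥ 0`, equals `ĥ(w₁, w₂)`. -/
theorem workload_LP_value (μ₁ μ₂ μ₃ c₁ c₂ c₃ w₁ w₂ : ℝ)
    (hμ₁ : 0 < μ₁) (hμ₂ : 0 < μ₂) (hμ₃ : 0 < μ₃)
    (hc₁ : 0 < c₁) (hc₂ : 0 < c₂) (hc₃ : 0 < c₃)
    (hreg : 0 < c₁ * μ₁ - c₂ * μ₂ + c₃ * μ₂)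
    (hw₁ : 0 ≤ w₁) (hw₂ : 0 ≤ w₂) :
    IsLeast {v : ℝ | ∃ q₁ q₂ q₃ : ℝ, 0 ≤ q₁ ∧ 0 ≤ q₂ ∧ 0 ≤ q₃ ∧
        q₁ / μ₁ + q₂ / μ₂ = w₁ ∧ q₂ / μ₃ + q₃ / μ₃ = w₂ ∧
        v = c₁ * q₁ + c₂ * q₂ + c₃ * q₃}
      (if μ₃ * w₂ ≤ μ₂ * w₁ then
          (c₁ * μ₁) * w₁ + (μ₃ / μ₂) * (c₂ * μ₂ - c₁ * μ₁) * w₂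
        else
          (c₂ * μ₂ - c₃ * μ₂) * w₁ + (c₃ * μ₃) * w₂) := by
  constructor
  · by_cases h : μ₃ * w₂ ≤ μ₂ * w₁
    · rw [if_pos h]
      refine ⟨μ₁ * (w₁ - μ₃ * w₂ / μ₂), μ₃ * w₂, 0, ?_, ?_, le_refl 0, ?_, ?_, ?_⟩
      · have : μ₃ * w₂ / μ₂ ≤ w₁ := by
          rw [div_le_iff₀ hμ₂] at *; linarith [mul_comm w₁ μ₂]
        nlinarith
      · positivity
      · field_simp; ring
      · field_simp; ring
      · field_simp
        ring
    · rw [if_neg h]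
      push_neg at h
      refine ⟨0, μ₂ * w₁, μ₃ * w₂ - μ₂ * w₁, le_refl 0, by positivity, by linarith, ?_, ?_, ?_⟩
      · field_simp; ring
      · field_simp; ring
      · ring
  · rintro v ⟨q₁, q₂, q₃, h1, h2, h3, e1, e2, rfl⟩
    have e1' : q₁ * μ₂ + q₂ * μ₁ = μ₁ * μ₂ * w₁ := by
      field_simp at e1; linarith
    have e2' : q₂ + q₃ = μ₃ * w₂ := by
      field_simp at e2; linarith
    by_cases h : μ₃ * w₂ ≤ μ₂ * w₁
    · rw [if_pos h]
      have hd : μ₃ / μ₂ * μ₂ = μ₃ := div_mul_cancel₀ _ hμ₂.ne'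
      have hq₂ : q₂ ≤ μ₃ * w₂ := by linarith
      have key : μ₂ * (c₁ * q₁ + c₂ * q₂ + c₃ * q₃) -
          μ₂ * ((c₁ * μ₁) * w₁ + (μ₃ / μ₂) * (c₂ * μ₂ - c₁ * μ₁) * w₂) =
          (μ₃ * w₂ - q₂) * (c₁ * μ₁ - c₂ * μ₂ + c₃ * μ₂) := by
        linear_combination c₁ * e1' + c₃ * μ₂ * e2' - (c₂ * μ₂ - c₁ * μ₁) * w₂ * hd
      have h0 : 0 ≤ (μ₃ * w₂ - q₂) * (c₁ * μ₁ - c₂ * μ₂ + c₃ * μ₂) :=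
        mul_nonneg (by linarith) hreg.le
      have : μ₂ * ((c₁ * μ₁) * w₁ + (μ₃ / μ₂) * (c₂ * μ₂ - c₁ * μ₁) * w₂) ≤
          μ₂ * (c₁ * q₁ + c₂ * q₂ + c₃ * q₃) := by linarith
      exact le_of_mul_le_mul_left this hμ₂
    · rw [if_neg h]
      push_neg at h
      have hq₂ : q₂ ≤ μ₂ * w₁ := by nlinarith
      have key : μ₂ * (c₁ * q₁ + c₂ * q₂ + c₃ * q₃) -
          μ₂ * ((c₂ * μ₂ - c₃ * μ₂) * w₁ + (c₃ * μ₃) * w₂) =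
          (μ₂ * w₁ - q₂) * (c₁ * μ₁ - c₂ * μ₂ + c₃ * μ₂) := by
        linear_combination c₁ * e1' + c₃ * μ₂ * e2'
      have h0 : 0 ≤ (μ₂ * w₁ - q₂) * (c₁ * μ₁ - c₂ * μ₂ + c₃ * μ₂) :=
        mul_nonneg (by linarith) hreg.le
      have : μ₂ * ((c₂ * μ₂ - c₃ * μ₂) * w₁ + (c₃ * μ₃) * w₂) ≤
          μ₂ * (c₁ * q₁ + c₂ * q₂ + c₃ * q₃) := by linarith
      exact le_of_mul_le_mul_left this hμ₂
end

section
/- Under the assumptions of the workload LP (μᵢ, cᵢ > 0, c₁μ₁ - c₂μ₂ + c₃μ₂ > 0, w₁, w₂ ≥ 0), the point (q₁*, q₂*, q₃*) given by q₁* = (μ₁/μ₂)(μ₂w₁ - μ₃w₂), q₂* = μ₃w₂, q₃* = 0 when μ₃w₂ ≤ μ₂w₁, and q₁* = 0, q₂* = μ₂w₁, q₃* = μ₃w₂ - μ₂w₁ when μ₃w₂ ≥ μ₂w₁, is feasible for the LP and achieves the optimal value ĥ(w₁, w₂). -/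
/-- The explicit point `(q₁*, q₂*, q₃*)` is feasible for the static workload LP
and achieves the optimal value `ĥ(w₁, w₂)`. -/
theorem workload_LP_optimal_solution (μ₁ μ₂ μ₃ c₁ c₂ c₃ w₁ w₂ : ℝ)
    (hμ₁ : 0 < μ₁) (hμ₂ : 0 < μ₂) (hμ₃ : 0 < μ₃)
    (hc₁ : 0 < c₁) (hc₂ : 0 < c₂) (hc₃ : 0 < c₃)
    (hreg : 0 < c₁ * μ₁ - c₂ * μ₂ + c₃ * μ₂)
    (hw₁ : 0 ≤ w₁) (hw₂ : 0 ≤ w₂) :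
    let q₁s : ℝ := if μ₃ * w₂ ≤ μ₂ * w₁ then (μ₁ / μ₂) * (μ₂ * w₁ - μ₃ * w₂) else 0
    let q₂s : ℝ := if μ₃ * w₂ ≤ μ₂ * w₁ then μ₃ * w₂ else μ₂ * w₁
    let q₃s : ℝ := if μ₃ * w₂ ≤ μ₂ * w₁ then 0 else μ₃ * w₂ - μ₂ * w₁
    let hhat : ℝ := if μ₃ * w₂ ≤ μ₂ * w₁ then
        (c₁ * μ₁) * w₁ + (μ₃ / μ₂) * (c₂ * μ₂ - c₁ * μ₁) * w₂
      else
        (c₂ * μ₂ - c₃ * μ₂) * w₁ + (c₃ * μ₃) * w₂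
    (0 ≤ q₁s ∧ 0 ≤ q₂s ∧ 0 ≤ q₃s ∧
      q₁s / μ₁ + q₂s / μ₂ = w₁ ∧ q₂s / μ₃ + q₃s / μ₃ = w₂) ∧
    c₁ * q₁s + c₂ * q₂s + c₃ * q₃s = hhat ∧
    (∀ q₁ q₂ q₃ : ℝ, 0 ≤ q₁ → 0 ≤ q₂ → 0 ≤ q₃ →
      q₁ / μ₁ + q₂ / μ₂ = w₁ → q₂ / μ₃ + q₃ / μ₃ = w₂ →
      c₁ * q₁s + c₂ * q₂s + c₃ * q₃s ≤ c₁ * q₁ + c₂ * q₂ + c₃ * q₃) := by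
  intro q₁s q₂s q₃s hhat
  have hμ₁' := hμ₁.ne'
  have hμ₂' := hμ₂.ne'
  have hμ₃' := hμ₃.ne'
  by_cases h : μ₃ * w₂ ≤ μ₂ * w₁
  · simp only [q₁s, q₂s, q₃s, hhat, if_pos h]
    refine ⟨⟨?_, ?_, le_refl _, ?_, ?_⟩, ?_, ?_⟩
    · have h' : 0 ≤ μ₂ * w₁ - μ₃ * w₂ := by linarith
      positivity
    · positivity
    · field_simp; ring
    · field_simp; ring
    · field_simp; ring
    · intro q₁ q₂ q₃ hq₁ hq₂ hq₃ hA hB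
      have e1 : q₁ * μ₂ = μ₁ * (μ₂ * w₁ - q₂) := by
        field_simp at hA; nlinarith [hA]
      have e3 : q₃ = μ₃ * w₂ - q₂ := by
        field_simp at hB; linarith
      have hq2le : q₂ ≤ μ₃ * w₂ := by nlinarith [hq₃, e3]
      have key : μ₂ * (c₁ * ((μ₁ / μ₂) * (μ₂ * w₁ - μ₃ * w₂)) + c₂ * (μ₃ * w₂) + c₃ * 0)
          ≤ μ₂ * (c₁ * q₁ + c₂ * q₂ + c₃ * q₃) := by
        have expand : μ₂ * (c₁ * ((μ₁ / μ₂) * (μ₂ * w₁ - μ₃ * w₂)) + c₂ * (μ₃ * w₂) + c₃ * 0)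
            = c₁ * μ₁ * (μ₂ * w₁ - μ₃ * w₂) + μ₂ * c₂ * (μ₃ * w₂) := by
          field_simp; ring
        rw [expand]
        have h1 : c₁ * (q₁ * μ₂) = c₁ * (μ₁ * (μ₂ * w₁ - q₂)) := by rw [e1]
        have h3 : μ₂ * c₃ * q₃ = μ₂ * c₃ * (μ₃ * w₂ - q₂) := by rw [e3]
        nlinarith [mul_nonneg (sub_nonneg.mpr hq2le) hreg.le, h1, h3]
      exact le_of_mul_le_mul_left key hμ₂
  · push_neg at h
    simp only [q₁s, q₂s, q₃s, hhat, if_neg (not_le.mpr h)]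
    refine ⟨⟨le_refl _, ?_, ?_, ?_, ?_⟩, ?_, ?_⟩
    · positivity
    · linarith
    · field_simp; ring
    · field_simp; ring
    · ring
    · intro q₁ q₂ q₃ hq₁ hq₂ hq₃ hA hB
      have e1 : q₁ * μ₂ = μ₁ * (μ₂ * w₁ - q₂) := by
        field_simp at hA; nlinarith [hA]
      have e3 : q₃ = μ₃ * w₂ - q₂ := by
        field_simp at hB; linarith
      have hq2le : q₂ ≤ μ₂ * w₁ := by nlinarith [mul_nonneg hq₁ hμ₂.le, e1]
      have key : μ₂ * (c₁ * 0 + c₂ * (μ₂ * w₁) + c₃ * (μ₃ * w₂ - μ₂ * w₁))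
          ≤ μ₂ * (c₁ * q₁ + c₂ * q₂ + c₃ * q₃) := by
        have h1 : c₁ * (q₁ * μ₂) = c₁ * (μ₁ * (μ₂ * w₁ - q₂)) := by rw [e1]
        have h3 : μ₂ * c₃ * q₃ = μ₂ * c₃ * (μ₃ * w₂ - q₂) := by rw [e3]
        nlinarith [mul_nonneg (sub_nonneg.mpr hq2le) hreg.le, h1, h3]
      exact le_of_mul_le_mul_left key hμ₂
end

section
/- Let {f_n} and {g_n} be sequences in D([0,∞):ℝ) and f, g continuous functions on [0,∞) such that f_n → f and g_n → g in the Skorohod topology. Suppose ∫_{[0,∞)} e^{-γt} 1_{{g(t)=0}} dt = 0 for some γ > 0, and let ε_n ≥ 0 with ε_n → 0. Then for all T > 0, ∫_0^T e^{-γt} f_n(t) 1_{{g_n(t) ≥ ε_n}} dt → ∫_0^T e^{-γt} f(t) 1_{{g(t) ≥ 0}} dt as n → ∞. -/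
open MeasureTheory Set Filter

lemma rcll_aesm (x : ℝ → ℝ)
    (hx : ∀ t : ℝ, 0 ≤ t → ContinuousWithinAt x (Set.Ici t) t) (T : ℝ) :
    AEStronglyMeasurable x (volume.restrict (Set.Ioc (0:ℝ) T)) := by
  set F : ℕ → ℝ → ℝ := fun k t => x ((⌊t * 2 ^ k⌋ + 1) / 2 ^ k) with hF
  have hmeas : ∀ k, Measurable (F k) := by
    intro k
    have : F k = (fun j : ℤ => x ((j + 1) / 2 ^ k)) ∘ fun t : ℝ => ⌊t * 2 ^ k⌋ := by
      ext t; simp [hF]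
    rw [this]
    exact (measurable_of_countable _).comp ((measurable_id.mul_const _).floor)
  refine aestronglyMeasurable_of_tendsto_ae atTop
    (fun k => (hmeas k).aestronglyMeasurable) ?_
  filter_upwards [ae_restrict_mem measurableSet_Ioc] with t ht
  have ht0 : (0:ℝ) ≤ t := ht.1.le
  have hpos : ∀ k : ℕ, (0:ℝ) < 2 ^ k := fun k => by positivity
  have hlt : ∀ k, t < (⌊t * 2 ^ k⌋ + 1) / 2 ^ k := by
    intro k
    rw [lt_div_iff₀ (hpos k)]
    exact_mod_cast Int.lt_floor_add_one (t * 2 ^ k)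
  have hle : ∀ k, (⌊t * 2 ^ k⌋ + 1 : ℝ) / 2 ^ k ≤ t + 1 / 2 ^ k := by
    intro k
    rw [div_le_iff₀ (hpos k), add_mul, one_div, inv_mul_cancel₀ (hpos k).ne']
    have := Int.floor_le (t * 2 ^ k)
    linarith
  have htend : Tendsto (fun k : ℕ => (⌊t * 2 ^ k⌋ + 1 : ℝ) / 2 ^ k) atTop (nhds t) := by
    have h0 : Tendsto (fun k : ℕ => (1:ℝ) / 2 ^ k) atTop (nhds 0) := by
      simp only [one_div, ← inv_pow]
      exact tendsto_pow_atTop_nhds_zero_of_lt_one (by norm_num) (by norm_num)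
    have h1 : Tendsto (fun k : ℕ => t + 1 / 2 ^ k) atTop (nhds t) := by
      simpa using tendsto_const_nhds.add h0
    exact tendsto_of_tendsto_of_tendsto_of_le_of_le tendsto_const_nhds h1
      (fun k => (hlt k).le) hle
  have := (hx t ht0).tendsto.comp
    (tendsto_nhdsWithin_of_tendsto_nhds_of_eventually_within _ htend
      (Eventually.of_forall fun k => (hlt k).le))
  exact this

/-- Convergence of discounted integrals with indicators `1_{g_n ≥ ε_n}`. -/
theorem discounted_integral_indicator_ge_conv
    (f g : ℝ → ℝ) (fn gn : ℕ → ℝ → ℝ) (γ : ℝ) (hγ : 0 < γ)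
    (hfn : ∀ n, RCLL (fn n)) (hgn : ∀ n, RCLL (gn n))
    (hf : Continuous f) (hg : Continuous g)
    (hfconv : ∀ T : ℝ, 0 < T → TendstoUniformlyOn fn f atTop (Set.Icc 0 T))
    (hgconv : ∀ T : ℝ, 0 < T → TendstoUniformlyOn gn g atTop (Set.Icc 0 T))
    (hzero : ∫ t in Set.Ici (0 : ℝ),
        Real.exp (-γ * t) * Set.indicator {s : ℝ | g s = 0} (fun _ => (1 : ℝ)) t = 0)
    (εn : ℕ → ℝ) (hεn : ∀ n, 0 ≤ εn n) (hεn0 : Tendsto εn atTop (nhds 0)) :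
    ∀ T : ℝ, 0 < T →
      Tendsto (fun n => ∫ t in (0 : ℝ)..T,
          Real.exp (-γ * t) * fn n t * (if εn n ≤ gn n t then (1 : ℝ) else 0))
        atTop
        (nhds (∫ t in (0 : ℝ)..T,
          Real.exp (-γ * t) * f t * (if 0 ≤ g t then (1 : ℝ) else 0))) := by
  intro T hT
  -- Step 1: a.e. on [0,∞), g t ≠ 0
  have hgne : ∀ᵐ t ∂(volume.restrict (Set.Ici (0:ℝ))), g t ≠ 0 := by
    set h : ℝ → ℝ := fun t =>
      Real.exp (-γ * t) * Set.indicator {s : ℝ | g s = 0} (fun _ => (1 : ℝ)) t with hh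
    have hnn : ∀ t, 0 ≤ h t := by
      intro t
      apply mul_nonneg (Real.exp_pos _).le
      apply Set.indicator_nonneg
      intro _ _; norm_num
    have hmeas : Measurable h := by
      apply (Real.measurable_exp.comp (measurable_const.mul measurable_id)).mul
      exact measurable_const.indicator (measurableSet_eq_fun hg.measurable measurable_const)
    have hint : IntegrableOn h (Set.Ici 0) := by
      have hexpint : IntegrableOn (fun t => Real.exp (-γ * t)) (Set.Ici (0:ℝ)) := by
        rw [integrableOn_Ici_iff_integrableOn_Ioi]
        exact exp_neg_integrableOn_Ioi 0 hγ
      refine hexpint.mono' hmeas.aestronglyMeasurable ?_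
      filter_upwards with t
      rw [Real.norm_eq_abs, abs_of_nonneg (hnn t)]
      have : Set.indicator {s : ℝ | g s = 0} (fun _ => (1 : ℝ)) t ≤ 1 :=
        Set.indicator_le_self' (fun _ _ => by norm_num) t |>.trans (by
          by_cases ht : t ∈ {s : ℝ | g s = 0} <;> simp [Set.indicator_apply, ht])
      calc h t ≤ Real.exp (-γ * t) * 1 := by
            apply mul_le_mul_of_nonneg_left _ (Real.exp_pos _).le
            by_cases ht : t ∈ {s : ℝ | g s = 0} <;> simp [Set.indicator_apply, ht]
        _ = Real.exp (-γ * t) := mul_one _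
    have hzero' : h =ᵐ[volume.restrict (Set.Ici (0:ℝ))] 0 := by
      rw [← integral_eq_zero_iff_of_nonneg hnn hint]
      exact hzero
    filter_upwards [hzero'] with t ht
    intro hgt
    have : h t = Real.exp (-γ * t) := by
      simp [hh, Set.indicator_apply, hgt]
    rw [ht] at this
    exact (Real.exp_pos (-γ * t)).ne (by simpa using this.symm)
  have hgne' : ∀ᵐ t ∂(volume.restrict (Set.Ioc (0:ℝ) T)), g t ≠ 0 :=
    ae_restrict_of_ae_restrict_of_subset (fun t ht => ht.1.le) hgne
  -- rewrite interval integrals as set integrals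
  have hrw : ∀ (h : ℝ → ℝ), ∫ t in (0:ℝ)..T, h t = ∫ t in Set.Ioc (0:ℝ) T, h t :=
    fun h => intervalIntegral.integral_of_le hT.le
  simp only [hrw]
  -- dominated convergence
  refine tendsto_integral_filter_of_dominated_convergence (fun t => ‖f t‖ + 1)
    ?_ ?_ ?_ ?_
  · -- a.e. strong measurability
    filter_upwards with n
    have hfm := rcll_aesm (fn n) (hfn n).1 T
    obtain ⟨G, hGsm, hGe⟩ := rcll_aesm (gn n) (hgn n).1 T
    have hindm : AEStronglyMeasurable (fun t => if εn n ≤ gn n t then (1:ℝ) else 0)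
        (volume.restrict (Set.Ioc (0:ℝ) T)) := by
      refine ⟨fun t => if εn n ≤ G t then (1:ℝ) else 0, ?_, ?_⟩
      · exact (StronglyMeasurable.ite (measurableSet_le measurable_const hGsm.measurable)
          stronglyMeasurable_const stronglyMeasurable_const)
      · filter_upwards [hGe] with t ht
        rw [ht]
    exact ((Real.continuous_exp.comp (continuous_const.mul continuous_id)).aestronglyMeasurable.mul
      hfm).mul hindm
  · -- uniform bound
    have hev : ∀ᶠ n in atTop, ∀ t ∈ Set.Icc (0:ℝ) T, dist (f t) (fn n t) < 1 :=
      Metric.tendstoUniformlyOn_iff.mp (hfconv T hT) 1 one_pos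
    filter_upwards [hev] with n hn
    filter_upwards [ae_restrict_mem measurableSet_Ioc] with t ht
    have h1 : |Real.exp (-γ * t)| ≤ 1 := by
      rw [abs_of_pos (Real.exp_pos _)]
      apply Real.exp_le_one_iff.mpr
      nlinarith [ht.1]
    have h2 : |fn n t| ≤ ‖f t‖ + 1 := by
      have := hn t ⟨ht.1.le, ht.2⟩
      rw [Real.dist_eq] at this
      rw [Real.norm_eq_abs]
      have h3 := abs_sub_abs_le_abs_sub (fn n t) (f t)
      rw [abs_sub_comm] at h3
      linarith
    have h4 : |(if εn n ≤ gn n t then (1:ℝ) else 0)| ≤ 1 := by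
      split <;> simp
    rw [Real.norm_eq_abs, abs_mul, abs_mul]
    calc |Real.exp (-γ * t)| * |fn n t| * |if εn n ≤ gn n t then (1:ℝ) else 0|
        ≤ 1 * (‖f t‖ + 1) * 1 := by
          apply mul_le_mul _ h4 (abs_nonneg _) (by positivity)
          exact mul_le_mul h1 h2 (abs_nonneg _) one_pos.le
      _ = ‖f t‖ + 1 := by ring
  · -- bound integrable
    exact (hf.norm.add continuous_const).integrableOn_Ioc
  · -- pointwise a.e. convergence
    filter_upwards [hgne', ae_restrict_mem measurableSet_Ioc] with t hgt ht
    have htmem : t ∈ Set.Icc (0:ℝ) T := ⟨ht.1.le, ht.2⟩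
    have hfnt : Tendsto (fun n => fn n t) atTop (nhds (f t)) :=
      (hfconv T hT).tendsto_at htmem
    have hgnt : Tendsto (fun n => gn n t) atTop (nhds (g t)) :=
      (hgconv T hT).tendsto_at htmem
    have hind : Tendsto (fun n => if εn n ≤ gn n t then (1:ℝ) else 0) atTop
        (nhds (if 0 ≤ g t then (1:ℝ) else 0)) := by
      rcases hgt.lt_or_gt with hlt | hpos
      · have hev : ∀ᶠ n in atTop, gn n t < 0 := hgnt.eventually_lt_const hlt
        rw [if_neg (not_le.mpr hlt)]
        refine Tendsto.congr' ?_ tendsto_const_nhds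
        filter_upwards [hev] with n hn
        rw [if_neg (not_le.mpr (lt_of_lt_of_le hn (hεn n)))]
      · have hev1 : ∀ᶠ n in atTop, g t / 2 < gn n t :=
          hgnt.eventually_const_lt (by linarith)
        have hev2 : ∀ᶠ n in atTop, εn n < g t / 2 :=
          hεn0.eventually_lt_const (by linarith)
        rw [if_pos hpos.le]
        refine Tendsto.congr' ?_ tendsto_const_nhds
        filter_upwards [hev1, hev2] with n h1 h2
        rw [if_pos (le_of_lt (h2.trans h1))]
    exact (tendsto_const_nhds.mul hfnt).mul hind
end

section
/- Let {f_n} and {g_n} be sequences in D([0,∞):ℝ) and f, g continuous functions on [0,∞) such that f_n → f and g_n → g uniformly on compacts. Suppose the set {t ≥ 0 : g(t) = 0} has Lebesgue measure zero, and let ε_n ≥ 0 with ε_n → 0. Then for all T > 0 and γ > 0, ∫_0^T e^{-γt} f_n(t) 1_{{g_n(t) ≤ ε_n}} dt → ∫_0^T e^{-γt} f(t) 1_{{g(t) ≤ 0}} dt as n → ∞. -/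
open MeasureTheory Set Filter

/-- A right-continuous function on `ℝ` is measurable. -/
lemma measurable_of_rightCont (x : ℝ → ℝ)
    (hx : ∀ t : ℝ, ContinuousWithinAt x (Set.Ici t) t) : Measurable x := by
  have hmeas : ∀ k : ℕ, Measurable (fun t : ℝ => x ((⌈t * 2 ^ k⌉ : ℤ) / 2 ^ k)) := fun k =>
    (measurable_of_countable (fun m : ℤ => x ((m : ℝ) / 2 ^ k))).comp
      (Int.measurable_ceil.comp (measurable_id.mul_const _))
  apply measurable_of_tendsto_metrizable hmeas
  rw [tendsto_pi_nhds]
  intro t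
  have h1 : ∀ k : ℕ, t ≤ ((⌈t * 2 ^ k⌉ : ℤ) : ℝ) / 2 ^ k := by
    intro k
    rw [le_div_iff₀ (by positivity)]
    exact Int.le_ceil _
  have h2 : ∀ k : ℕ, ((⌈t * 2 ^ k⌉ : ℤ) : ℝ) / 2 ^ k ≤ t + (1 / 2 : ℝ) ^ k := by
    intro k
    rw [div_le_iff₀ (by positivity)]
    have hc := Int.ceil_lt_add_one (t * 2 ^ k)
    have h2 : (t + (1 / 2 : ℝ) ^ k) * 2 ^ k = t * 2 ^ k + 1 := by rw [add_mul, ← mul_pow]; norm_num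
    linarith
  have hs : Tendsto (fun k : ℕ => ((⌈t * 2 ^ k⌉ : ℤ) : ℝ) / 2 ^ k) atTop (nhdsWithin t (Set.Ici t)) := by
    rw [tendsto_nhdsWithin_iff]
    refine ⟨?_, Eventually.of_forall fun k => h1 k⟩
    have hup : Tendsto (fun k : ℕ => t + (1 / 2 : ℝ) ^ k) atTop (nhds t) := by
      have := tendsto_const_nhds (x := t) (f := atTop (α := ℕ)) |>.add
        (tendsto_pow_atTop_nhds_zero_of_lt_one (by norm_num) (by norm_num : (1/2:ℝ) < 1))
      simpa using this
    exact tendsto_of_tendsto_of_tendsto_of_le_of_le tendsto_const_nhds hup h1 h2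
  exact (hx t).tendsto.comp hs

/-- Extend an RCLL function to a globally right-continuous one by `x (max t 0)`. -/
lemma measurable_rcll_max (x : ℝ → ℝ) (hx : RCLL x) :
    Measurable (fun t : ℝ => x (max t 0)) := by
  apply measurable_of_rightCont
  intro t
  rcases lt_or_ge t 0 with ht | ht
  · have hev : (fun s : ℝ => x (max s 0)) =ᶠ[nhds t] (fun _ => x 0) := by
      filter_upwards [Iio_mem_nhds ht] with s hs
      simp [max_eq_right (le_of_lt (Set.mem_Iio.mp hs))]
    exact ((continuousAt_const (y := x 0)).congr hev.symm).continuousWithinAt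
  · have := hx.1 t ht
    apply this.congr
    · intro s hs
      simp [max_eq_left (le_trans ht hs)]
    · simp [max_eq_left ht]

/-- Convergence of discounted integrals with indicators `1_{g_n ≤ ε_n}`. -/
theorem discounted_integral_indicator_le_conv
    (f g : ℝ → ℝ) (fn gn : ℕ → ℝ → ℝ)
    (hfn : ∀ n, RCLL (fn n)) (hgn : ∀ n, RCLL (gn n))
    (hf : Continuous f) (hg : Continuous g)
    (hfconv : ∀ T : ℝ, 0 < T → TendstoUniformlyOn fn f atTop (Set.Icc 0 T))
    (hgconv : ∀ T : ℝ, 0 < T → TendstoUniformlyOn gn g atTop (Set.Icc 0 T))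
    (hzero : MeasureTheory.volume {t : ℝ | 0 ≤ t ∧ g t = 0} = 0)
    (εn : ℕ → ℝ) (hεn : ∀ n, 0 ≤ εn n) (hεn0 : Tendsto εn atTop (nhds 0)) :
    ∀ T γ : ℝ, 0 < T → 0 < γ →
      Tendsto (fun n => ∫ t in (0 : ℝ)..T,
          Real.exp (-γ * t) * fn n t * (if gn n t ≤ εn n then (1 : ℝ) else 0))
        atTop
        (nhds (∫ t in (0 : ℝ)..T,
          Real.exp (-γ * t) * f t * (if g t ≤ 0 then (1 : ℝ) else 0))) := by
  intro T γ hT hγ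
  -- bound for f on [0, T]
  obtain ⟨C, hC⟩ : ∃ C : ℝ, ∀ t ∈ Set.Icc (0:ℝ) T, |f t| ≤ C := by
    obtain ⟨C, hC⟩ := (isCompact_Icc (a := (0:ℝ)) (b := T)).exists_bound_of_continuousOn
      hf.continuousOn
    exact ⟨C, fun t ht => by simpa using hC t ht⟩
  have hIoc : Set.uIoc (0:ℝ) T = Set.Ioc 0 T := Set.uIoc_of_le hT.le
  apply intervalIntegral.tendsto_integral_filter_of_dominated_convergence
    (bound := fun _ => C + 1)
  · -- measurability
    filter_upwards with n
    have hm : Measurable (fun t : ℝ => Real.exp (-γ * t) * fn n (max t 0) *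
        (if gn n (max t 0) ≤ εn n then (1:ℝ) else 0)) := by
      refine (((Real.continuous_exp.comp (continuous_const.mul continuous_id)).measurable).mul
        (measurable_rcll_max _ (hfn n))).mul ?_
      exact Measurable.ite (measurableSet_le (measurable_rcll_max _ (hgn n)) measurable_const)
        measurable_const measurable_const
    apply hm.aestronglyMeasurable.congr
    rw [hIoc]
    filter_upwards [ae_restrict_mem measurableSet_Ioc] with t ht
    rw [max_eq_left ht.1.le]
  · -- bound
    have hbdd : ∀ᶠ n in atTop, ∀ t ∈ Set.Icc (0:ℝ) T, dist (f t) (fn n t) < 1 :=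
      Metric.tendstoUniformlyOn_iff.mp (hfconv T hT) 1 one_pos
    filter_upwards [hbdd] with n hn
    filter_upwards with t ht
    rw [hIoc] at ht
    have htI : t ∈ Set.Icc (0:ℝ) T := ⟨ht.1.le, ht.2⟩
    have h1 : |fn n t| ≤ C + 1 := by
      have h3 := hn t htI
      rw [Real.dist_eq, abs_sub_comm] at h3
      have h4 := abs_sub_abs_le_abs_sub (fn n t) (f t)
      have h2 := hC t htI
      linarith
    have hexp : Real.exp (-γ * t) ≤ 1 := by
      rw [Real.exp_le_one_iff]
      nlinarith [ht.1]
    have hexp0 : (0:ℝ) ≤ Real.exp (-γ * t) := (Real.exp_pos _).le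
    have hind : |(if gn n t ≤ εn n then (1:ℝ) else 0)| ≤ 1 := by
      split <;> norm_num
    calc ‖Real.exp (-γ * t) * fn n t * (if gn n t ≤ εn n then (1:ℝ) else 0)‖
        = |Real.exp (-γ * t)| * |fn n t| * |(if gn n t ≤ εn n then (1:ℝ) else 0)| := by
          rw [Real.norm_eq_abs, abs_mul, abs_mul]
      _ ≤ 1 * (C + 1) * 1 := by
          have hC1 : (0:ℝ) ≤ C + 1 := le_trans (abs_nonneg _) h1
          have hexp1 : |Real.exp (-γ * t)| ≤ 1 := by rwa [abs_of_nonneg hexp0]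
          exact mul_le_mul (mul_le_mul hexp1 h1 (abs_nonneg _) zero_le_one) hind
            (abs_nonneg _) (by rw [one_mul]; exact hC1)
      _ = C + 1 := by ring
  · exact intervalIntegrable_const
  · -- a.e. pointwise convergence
    have hae : ∀ᵐ t : ℝ, t ∈ Set.uIoc (0:ℝ) T → g t ≠ 0 := by
      rw [ae_iff]
      apply measure_mono_null _ hzero
      intro t ht
      simp only [Set.mem_setOf_eq, not_forall] at ht
      obtain ⟨ht1, ht2⟩ := ht
      rw [hIoc] at ht1
      exact ⟨ht1.1.le, not_not.mp ht2⟩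
    filter_upwards [hae] with t hta ht
    have htne := hta ht
    rw [hIoc] at ht
    have htI : t ∈ Set.Icc (0:ℝ) T := ⟨ht.1.le, ht.2⟩
    have hft : Tendsto (fun n => fn n t) atTop (nhds (f t)) :=
      (hfconv T hT).tendsto_at htI
    have hgt : Tendsto (fun n => gn n t) atTop (nhds (g t)) :=
      (hgconv T hT).tendsto_at htI
    rcases lt_or_gt_of_ne htne with hlt | hgt'
    · -- g t < 0 : indicator eventually 1
      have hev : ∀ᶠ n in atTop, gn n t ≤ εn n := by
        filter_upwards [hgt (Iio_mem_nhds hlt)] with n hn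
        exact le_trans (le_of_lt hn) (hεn n)
      have : (fun n => Real.exp (-γ * t) * fn n t * (if gn n t ≤ εn n then (1:ℝ) else 0))
          =ᶠ[atTop] (fun n => Real.exp (-γ * t) * fn n t) := by
        filter_upwards [hev] with n hn
        simp [hn]
      rw [if_pos hlt.le, mul_one]
      exact Tendsto.congr' this.symm (tendsto_const_nhds.mul hft)
    · -- g t > 0 : indicator eventually 0
      have hev : ∀ᶠ n in atTop, ¬ gn n t ≤ εn n := by
        have h1 : ∀ᶠ n in atTop, gn n t > g t / 2 := hgt (Ioi_mem_nhds (by linarith))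
        have h2 : ∀ᶠ n in atTop, εn n < g t / 2 := hεn0 (Iio_mem_nhds (by linarith))
        filter_upwards [h1, h2] with n hn1 hn2
        push_neg
        linarith
      have : (fun n => Real.exp (-γ * t) * fn n t * (if gn n t ≤ εn n then (1:ℝ) else 0))
          =ᶠ[atTop] (fun _ => (0:ℝ)) := by
        filter_upwards [hev] with n hn
        simp [hn]
      rw [if_neg (not_le.mpr hgt'), mul_zero]
      exact Tendsto.congr' this.symm tendsto_const_nhds
end

section
/- Let Ψ : ℝ₊ → ℝ₊ be non-decreasing and Lipschitz with constant μ₃/μ₂, satisfying 0 ≤ Ψ(w₂) ≤ (μ₃/μ₂)w₂ for all w₂ ≥ 0. Let B₂ : [0,∞) → ℝ be continuous with B₂(0) = 0, and set W₂*(t) = B₂(t) + sup_{0≤s≤t} max(-B₂(s), 0). Let B₁ : [0,∞) → ℝ be continuous with B₁(0) ≥ 0. Then there is a unique continuous function W₁* : [0,∞) → ℝ satisfying W₁*(t) = B₁(t) + sup_{0≤s≤t} max(Ψ(W₂*(s)) - B₁(s), 0) for all t ≥ 0, and this W₁* satisfies W₁*(t) ≥ Ψ(W₂*(t)) ≥ 0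 for all t ≥ 0. -/
open Set

lemma runningSup_bddAbove {f : ℝ → ℝ} (hf : ContinuousOn f (Ici 0)) {t : ℝ} (ht : 0 ≤ t) :
    BddAbove (f '' Icc 0 t) :=
  (isCompact_Icc.image_of_continuousOn (hf.mono (fun x hx => hx.1))).bddAbove

lemma runningSup_contOn {f : ℝ → ℝ} (hf : ContinuousOn f (Ici 0)) :
    ContinuousOn (fun t => sSup (f '' Icc 0 t)) (Ici 0) := by
  rw [Metric.continuousOn_iff]
  intro t₀ ht₀ ε hε
  have hcK : IsCompact (Icc (0:ℝ) (t₀ + 1)) := isCompact_Icc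
  have hfK : ContinuousOn f (Icc 0 (t₀ + 1)) := hf.mono (fun x hx => hx.1)
  have huc := hcK.uniformContinuousOn_of_continuous hfK
  rw [Metric.uniformContinuousOn_iff] at huc
  obtain ⟨δ, hδ, hucδ⟩ := huc (ε / 2) (by linarith)
  refine ⟨min δ 1, by positivity, fun t ht hd => ?_⟩
  have key : ∀ a b : ℝ, 0 ≤ a → a ≤ b → b ≤ t₀ + 1 → b - a < δ →
      sSup (f '' Icc 0 a) ≤ sSup (f '' Icc 0 b) ∧
      sSup (f '' Icc 0 b) ≤ sSup (f '' Icc 0 a) + ε / 2 := by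
    intro a b ha hab hb hba
    have hbA : BddAbove (f '' Icc 0 b) := runningSup_bddAbove hf (ha.trans hab)
    have hne : (f '' Icc 0 a).Nonempty := (nonempty_Icc.mpr ha).image f
    constructor
    · exact csSup_le_csSup hbA hne (image_mono (f := f) (Icc_subset_Icc_right hab))
    · refine csSup_le ((nonempty_Icc.mpr (ha.trans hab)).image f) ?_
      rintro x ⟨s, hs, rfl⟩
      rcases le_total s a with hsa | hsa
      · have : f s ≤ sSup (f '' Icc 0 a) :=
          le_csSup (runningSup_bddAbove hf ha) (mem_image_of_mem f ⟨hs.1, hsa⟩)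
        linarith
      · have hsK : s ∈ Icc (0:ℝ) (t₀ + 1) := ⟨hs.1, hs.2.trans hb⟩
        have haK : a ∈ Icc (0:ℝ) (t₀ + 1) := ⟨ha, by linarith⟩
        have hdist : dist s a < δ := by
          rw [Real.dist_eq, abs_of_nonneg (by linarith)]
          linarith [hs.2]
        have h1 : dist (f s) (f a) < ε / 2 := hucδ s hsK a haK hdist
        have h2 : f a ≤ sSup (f '' Icc 0 a) :=
          le_csSup (runningSup_bddAbove hf ha) (mem_image_of_mem f ⟨ha, le_refl a⟩)
        rw [Real.dist_eq] at h1
        have := abs_lt.mp h1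
        linarith [this.1, this.2]
  have hd1 : |t - t₀| < δ := lt_of_lt_of_le (by rwa [Real.dist_eq] at hd) (min_le_left _ _)
  have hd2 : |t - t₀| < 1 := lt_of_lt_of_le (by rwa [Real.dist_eq] at hd) (min_le_right _ _)
  rcases le_total t t₀ with h | h
  · obtain ⟨h1, h2⟩ := key t t₀ ht h (by linarith) (by
      have := abs_lt.mp hd1; linarith [this.1])
    rw [Real.dist_eq, abs_of_nonpos (by linarith)]
    linarith
  · obtain ⟨h1, h2⟩ := key t₀ t ht₀ h
      (by have := abs_lt.mp hd2; linarith [this.2])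
      (by have := abs_lt.mp hd1; linarith [this.2])
    rw [Real.dist_eq, abs_of_nonneg (by linarith)]
    linarith

/-- Existence, uniqueness and the free-boundary constraint for the reflected
workload process `W₁*` driven by `B₁` and the reflected path `W₂*`. -/
theorem reflected_workload_exists_unique (μ₂ μ₃ : ℝ) (hμ₂ : 0 < μ₂) (hμ₃ : 0 < μ₃)
    (Ψ : ℝ → ℝ)
    (hΨmono : MonotoneOn Ψ (Set.Ici 0))
    (hΨlip : ∀ a b : ℝ, 0 ≤ a → 0 ≤ b → |Ψ a - Ψ b| ≤ μ₃ / μ₂ * |a - b|)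
    (hΨbd : ∀ w : ℝ, 0 ≤ w → 0 ≤ Ψ w ∧ Ψ w ≤ μ₃ / μ₂ * w)
    (B₁ B₂ : ℝ → ℝ) (hB₁ : Continuous B₁) (hB₂ : Continuous B₂)
    (hB₂0 : B₂ 0 = 0) (hB₁0 : 0 ≤ B₁ 0) :
    let W₂ : ℝ → ℝ := fun t => B₂ t + sSup ((fun s => max (-(B₂ s)) 0) '' Set.Icc 0 t)
    ∃ W₁ : ℝ → ℝ,
      (ContinuousOn W₁ (Set.Ici 0) ∧
        (∀ t, 0 ≤ t →
          W₁ t = B₁ t + sSup ((fun s => max (Ψ (W₂ s) - B₁ s) 0) '' Set.Icc 0 t)) ∧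
        (∀ t, 0 ≤ t → Ψ (W₂ t) ≤ W₁ t ∧ 0 ≤ Ψ (W₂ t))) ∧
      ∀ W₁' : ℝ → ℝ,
        (ContinuousOn W₁' (Set.Ici 0) ∧
          ∀ t, 0 ≤ t →
            W₁' t = B₁ t + sSup ((fun s => max (Ψ (W₂ s) - B₁ s) 0) '' Set.Icc 0 t)) →
        ∀ t, 0 ≤ t → W₁' t = W₁ t := by
  intro W₂
  -- continuity of the inner path
  have hg : ContinuousOn (fun s => max (-(B₂ s)) 0) (Ici 0) :=
    (hB₂.neg.max continuous_const).continuousOn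
  have hW₂cont : ContinuousOn W₂ (Ici 0) :=
    hB₂.continuousOn.add (runningSup_contOn hg)
  -- nonnegativity of W₂ on Ici 0
  have hW₂nonneg : ∀ t, 0 ≤ t → 0 ≤ W₂ t := by
    intro t ht
    have hmem : max (-(B₂ t)) 0 ∈ (fun s => max (-(B₂ s)) 0) '' Icc 0 t :=
      mem_image_of_mem _ ⟨ht, le_refl t⟩
    have hle : max (-(B₂ t)) 0 ≤ sSup ((fun s => max (-(B₂ s)) 0) '' Icc 0 t) :=
      le_csSup (runningSup_bddAbove hg ht) hmem
    have : -(B₂ t) ≤ max (-(B₂ t)) 0 := le_max_left _ _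
    simp only [W₂]
    linarith
  -- continuity of Ψ on Ici 0
  have hΨcont : ContinuousOn Ψ (Ici 0) := by
    have : LipschitzOnWith (Real.toNNReal (μ₃ / μ₂)) Ψ (Ici 0) := by
      apply LipschitzOnWith.of_dist_le_mul
      intro x hx y hy
      rw [Real.dist_eq, Real.dist_eq]
      have h := hΨlip x y hx hy
      rwa [Real.coe_toNNReal _ (by positivity : (0:ℝ) ≤ μ₃ / μ₂)]
    exact this.continuousOn
  -- continuity of Ψ ∘ W₂
  have hΨW₂ : ContinuousOn (fun s => Ψ (W₂ s)) (Ici 0) :=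
    hΨcont.comp hW₂cont (fun x hx => hW₂nonneg x hx)
  set f : ℝ → ℝ := fun s => max (Ψ (W₂ s) - B₁ s) 0 with hf_def
  have hfcont : ContinuousOn f (Ici 0) :=
    (hΨW₂.sub hB₁.continuousOn).sup continuousOn_const
  refine ⟨fun t => B₁ t + sSup (f '' Icc 0 t), ⟨?_, fun t _ => rfl, ?_⟩, ?_⟩
  · exact hB₁.continuousOn.add (runningSup_contOn hfcont)
  · intro t ht
    have h0 : 0 ≤ Ψ (W₂ t) := (hΨbd _ (hW₂nonneg t ht)).1
    refine ⟨?_, h0⟩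
    have hmem : f t ∈ f '' Icc 0 t := mem_image_of_mem f ⟨ht, le_refl t⟩
    have hle : f t ≤ sSup (f '' Icc 0 t) := le_csSup (runningSup_bddAbove hfcont ht) hmem
    have : Ψ (W₂ t) - B₁ t ≤ f t := le_max_left _ _
    show Ψ (W₂ t) ≤ B₁ t + sSup (f '' Icc 0 t)
    linarith
  · rintro W₁' ⟨-, hW₁'⟩ t ht
    exact hW₁' t ht
end
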